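/- Let α = e α_{i,0} + f α_{i,1} ∈ O_K^+ with i odd, e ≥ 1, f ≥ 1 (i.e., r = 0). Then N(α) > e f √Δ. -/

import Mathlib

open Real Filter

noncomputable def omg (D : ℕ) : ℝ := if D % 4 = 1 then (1 + Real.sqrt D) / 2 else Real.sqrt D

noncomputable def omgc (D : ℕ) : ℝ := if D % 4 = 1 then (1 - Real.sqrt D) / 2 else -Real.sqrt D

noncomputable def sigmaD (D : ℕ) : ℝ := omg D + (⌊-omgc D⌋ : ℤ)

noncomputable def gam (D : ℕ) : ℕ → ℝ
  | 0 => sigmaD D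
  | n + 1 => 1 / (gam D n - ⌊gam D n⌋)

/-- partial quotients of the continued fraction of σ_D -/
noncomputable def uD (D : ℕ) (n : ℕ) : ℤ := ⌊gam D n⌋

noncomputable def emb1 (D : ℕ) (x : ℤ × ℤ) : ℝ := (x.1 : ℝ) + (x.2 : ℝ) * omg D

noncomputable def emb2 (D : ℕ) (x : ℤ × ℤ) : ℝ := (x.1 : ℝ) + (x.2 : ℝ) * omgc D

def conjp (D : ℕ) (x : ℤ × ℤ) : ℤ × ℤ := if D % 4 = 1 then (x.1 + x.2, -x.2) else (x.1, -x.2)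

def TotPos (D : ℕ) (x : ℤ × ℤ) : Prop := 0 < emb1 D x ∧ 0 < emb2 D x

def Indec (D : ℕ) (x : ℤ × ℤ) : Prop :=
  TotPos D x ∧ ¬ ∃ y z : ℤ × ℤ, TotPos D y ∧ TotPos D z ∧ x = y + z

noncomputable def Nm (D : ℕ) (x : ℤ × ℤ) : ℝ := emb1 D x * emb2 D x

noncomputable def disc (D : ℕ) : ℝ := if D % 4 = 1 then (D : ℝ) else 4 * (D : ℝ)

def UniqDec (D : ℕ) (x : ℤ × ℤ) : Prop :=
  ∃! m : Multiset (ℤ × ℤ), (∀ y ∈ m, Indec D y) ∧ m.sum = x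

/-- first real embedding of α_i = p_i - q_i ω_D' -/
noncomputable def ar (D : ℕ) (p q : ℤ → ℤ) (i : ℤ) : ℝ := (p i : ℝ) - (q i : ℝ) * omgc D

/-- second real embedding (Galois conjugate) of α_i -/
noncomputable def ac (D : ℕ) (p q : ℤ → ℤ) (i : ℤ) : ℝ := (p i : ℝ) - (q i : ℝ) * omg D

/-- first embedding of the semiconvergent α_{i,r} = α_i + r α_{i+1} -/
noncomputable def ar2 (D : ℕ) (p q : ℤ → ℤ) (i r : ℤ) : ℝ := ar D p q i + (r : ℝ) * ar D p q (i + 1)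

/-- conjugate embedding of the semiconvergent α_{i,r} -/
noncomputable def ac2 (D : ℕ) (p q : ℤ → ℤ) (i r : ℤ) : ℝ := ac D p q i + (r : ℝ) * ac D p q (i + 1)

/-- N_i = |N(α_i)| -/
noncomputable def Ni (D : ℕ) (p q : ℤ → ℤ) (i : ℤ) : ℝ := |ar D p q i * ac D p q i|

set_option maxHeartbeats 1000000 in
theorem stmt17 (D : ℕ)
    (hD2 : 2 ≤ D) (hsq : Squarefree D)
    (p q : ℤ → ℤ)
    (hpm1 : p (-1) = 1) (hqm1 : q (-1) = 0)
    (hp0 : p 0 = ⌈(uD D 0 : ℚ) / 2⌉) (hq0 : q 0 = 1)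
    (hprec : ∀ i : ℤ, -1 ≤ i → p (i + 2) = uD D (i + 2).toNat * p (i + 1) + p i)
    (hqrec : ∀ i : ℤ, -1 ≤ i → q (i + 2) = uD D (i + 2).toNat * q (i + 1) + q i)
    (i e f : ℤ) (hi : -1 ≤ i) (hodd : Odd i)
    (he : 1 ≤ e) (hf : 1 ≤ f)
    (hα : 0 < (e : ℝ) * ar2 D p q i 0 + (f : ℝ) * ar2 D p q i 1 ∧
           0 < (e : ℝ) * ac2 D p q i 0 + (f : ℝ) * ac2 D p q i 1) :
    (e : ℝ) * (f : ℝ) * Real.sqrt (disc D) <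
      ((e : ℝ) * ar2 D p q i 0 + (f : ℝ) * ar2 D p q i 1) *
        ((e : ℝ) * ac2 D p q i 0 + (f : ℝ) * ac2 D p q i 1) := by
  clear hα
  -- basic facts about √D
  have hDpos : (0:ℝ) < D := by exact_mod_cast (by omega : 0 < D)
  have hirr : Irrational (Real.sqrt D) := by
    rw [irrational_sqrt_natCast_iff]
    rintro ⟨k, hk⟩
    have hdvd : k * k ∣ D := ⟨1, by omega⟩
    have hk1 := Nat.isUnit_iff.mp (hsq k hdvd)
    rw [hk1] at hk
    omega
  have hone_lt : 1 < Real.sqrt D := by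
    rw [show (1:ℝ) = Real.sqrt 1 by simp]
    exact Real.sqrt_lt_sqrt (by norm_num) (by exact_mod_cast hD2.trans_lt' one_lt_two)
  -- omg, omgc facts
  have homgc_neg : 0 < -omgc D := by
    unfold omgc; split_ifs
    · linarith
    · simp only [neg_neg]; positivity
  have homg_irr : Irrational (omg D) := by
    unfold omg; split_ifs
    · rw [show (1 + Real.sqrt D) / 2 = ((1/2 : ℚ) : ℝ) + ((1/2 : ℚ) : ℝ) * Real.sqrt D by
        push_cast; ring]
      exact ((hirr.ratCast_mul (by norm_num)).ratCast_add (q := 1/2))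
    · exact hirr
  have homgc_irr : Irrational (omgc D) := by
    unfold omgc; split_ifs
    · rw [show (1 - Real.sqrt D) / 2 = ((1/2 : ℚ) : ℝ) + ((-1/2 : ℚ) : ℝ) * Real.sqrt D by
        push_cast; ring]
      exact ((hirr.ratCast_mul (by norm_num)).ratCast_add (q := 1/2))
    · exact hirr.neg
  have homg_sub : omg D - omgc D = Real.sqrt (disc D) := by
    unfold omg omgc disc; split_ifs
    · ring
    · rw [show (4 : ℝ) * (D : ℝ) = (2 * Real.sqrt D)^2 by
        rw [mul_pow, Real.sq_sqrt hDpos.le]; norm_num]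
      rw [Real.sqrt_sq (by positivity)]; ring
  -- gam facts
  have hgam_irr : ∀ n : ℕ, Irrational (gam D n) := by
    intro n
    induction n with
    | zero =>
      show Irrational (sigmaD D)
      exact homg_irr.add_intCast _
    | succ k ih =>
      show Irrational (1 / (gam D k - ⌊gam D k⌋))
      rw [one_div]
      exact (ih.sub_intCast _).inv
  have hfract : ∀ n : ℕ, 0 < gam D n - ⌊gam D n⌋ ∧ gam D n - ⌊gam D n⌋ < 1 := by
    intro n
    constructor
    · have h1 : (⌊gam D n⌋ : ℝ) ≤ gam D n := Int.floor_le _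
      have h2 : gam D n ≠ (⌊gam D n⌋ : ℝ) := (hgam_irr n).ne_int _
      cases h1.lt_or_eq with
      | inl h => linarith
      | inr h => exact absurd h.symm h2
    · have := Int.lt_floor_add_one (gam D n)
      linarith
  have hgam_gt1 : ∀ n : ℕ, 1 < gam D (n + 1) := by
    intro n
    show 1 < 1 / (gam D n - ⌊gam D n⌋)
    obtain ⟨h1, h2⟩ := hfract n
    rw [lt_div_iff₀ h1]; linarith
  have huD_pos : ∀ n : ℕ, 1 ≤ uD D (n + 1) := by
    intro n
    exact Int.le_floor.mpr (by exact_mod_cast (hgam_gt1 n).le)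
  -- value of u_0
  have hu0 : uD D 0 = 2 * ⌊-omgc D⌋ + (if D % 4 = 1 then 1 else 0) := by
    show ⌊gam D 0⌋ = _
    have h0 : gam D 0 = omg D + (⌊-omgc D⌋ : ℤ) := rfl
    rw [h0, Int.floor_add_intCast]
    by_cases hD4 : D % 4 = 1
    · simp only [omg, omgc, if_pos hD4]
      rw [show (1 + Real.sqrt D) / 2 = -((1 - Real.sqrt D) / 2) + (1 : ℤ) by push_cast; ring,
        Int.floor_add_intCast]
      ring
    · simp only [omg, omgc, if_neg hD4, neg_neg]
      ring
  -- value of p 0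
  have hp0' : p 0 = uD D 0 - ⌊-omgc D⌋ := by
    rw [hp0, hu0]
    split_ifs
    · rw [show ((2 * ⌊-omgc D⌋ + 1 : ℤ) : ℚ) / 2 = (1/2 : ℚ) + (⌊-omgc D⌋ : ℤ) by
        push_cast; ring, Int.ceil_add_intCast]
      have : ⌈(1/2 : ℚ)⌉ = 1 := by rw [Int.ceil_eq_iff]; norm_num
      rw [this]; ring
    · rw [show ((2 * ⌊-omgc D⌋ + 0 : ℤ) : ℚ) / 2 = ((⌊-omgc D⌋ : ℤ) : ℚ) by push_cast; ring,
        Int.ceil_intCast]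
      ring
  -- recurrences in ℝ form
  have hac_rec : ∀ k : ℕ, ac D p q ((k:ℤ) + 1) =
      (uD D (k+1) : ℝ) * ac D p q (k:ℤ) + ac D p q ((k:ℤ) - 1) := by
    intro k
    have h1 := hprec ((k:ℤ) - 1) (by omega)
    have h2 := hqrec ((k:ℤ) - 1) (by omega)
    rw [show (k:ℤ) - 1 + 2 = (k:ℤ) + 1 by ring, show (k:ℤ) - 1 + 1 = (k:ℤ) by ring,
      show ((k:ℤ) + 1).toNat = k + 1 by omega] at h1 h2
    unfold ac
    rw [h1, h2]
    push_cast
    ring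
  have har_rec : ∀ k : ℕ, ar D p q ((k:ℤ) + 1) =
      (uD D (k+1) : ℝ) * ar D p q (k:ℤ) + ar D p q ((k:ℤ) - 1) := by
    intro k
    have h1 := hprec ((k:ℤ) - 1) (by omega)
    have h2 := hqrec ((k:ℤ) - 1) (by omega)
    rw [show (k:ℤ) - 1 + 2 = (k:ℤ) + 1 by ring, show (k:ℤ) - 1 + 1 = (k:ℤ) by ring,
      show ((k:ℤ) + 1).toNat = k + 1 by omega] at h1 h2
    unfold ar
    rw [h1, h2]
    push_cast
    ring
  have hacm1 : ac D p q (-1) = 1 := by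
    unfold ac; rw [hpm1, hqm1]; norm_num
  -- the key invariant for the conjugate embedding
  have hinv : ∀ n : ℕ, ac D p q (n:ℤ) =
      -(ac D p q ((n:ℤ) - 1)) * (gam D n - ⌊gam D n⌋) := by
    intro n
    induction n with
    | zero =>
      show ac D p q 0 = -(ac D p q (0 - 1)) * (gam D 0 - ⌊gam D 0⌋)
      rw [show (0:ℤ) - 1 = -1 by ring, hacm1]
      have h0 : gam D 0 = omg D + (⌊-omgc D⌋ : ℤ) := rfl
      have key0 : gam D 0 - (⌊gam D 0⌋ : ℝ) =
          omg D + ((⌊-omgc D⌋ : ℤ) : ℝ) - ((uD D 0 : ℤ) : ℝ) := by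
        have hfl : uD D 0 = ⌊gam D 0⌋ := rfl
        rw [hfl, h0]
      rw [key0]
      unfold ac
      rw [hp0', hq0]
      push_cast
      ring
    | succ k ih =>
      have hcast : ((k + 1 : ℕ) : ℤ) = (k:ℤ) + 1 := by push_cast; ring
      rw [hcast, show (k:ℤ) + 1 - 1 = (k:ℤ) by ring, hac_rec k, ih]
      have hg : gam D (k + 1) = 1 / (gam D k - ⌊gam D k⌋) := rfl
      have hu : ((uD D (k + 1) : ℤ) : ℝ) = ((⌊gam D (k+1)⌋ : ℤ) : ℝ) := rfl
      have hne : gam D k - ⌊gam D k⌋ ≠ 0 := ne_of_gt (hfract k).1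
      rw [hu]
      set c := ((⌊gam D (k+1)⌋ : ℤ) : ℝ) with hc
      rw [hg]
      have hne' : Int.fract (gam D k) ≠ 0 := by rw [← Int.self_sub_floor]; exact hne
      field_simp [hne']
      ring
  -- sign of the conjugate embedding
  have hacpos : ∀ k : ℕ, 0 < (-1 : ℝ)^k * ac D p q ((k:ℤ) - 1) := by
    intro k
    induction k with
    | zero =>
      rw [show ((0:ℕ):ℤ) - 1 = -1 by ring, hacm1]
      norm_num
    | succ k ih =>
      have hcast : ((k + 1 : ℕ) : ℤ) - 1 = (k:ℤ) := by push_cast; ring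
      rw [hcast, hinv k]
      have heq : (-1 : ℝ)^(k+1) * (-(ac D p q ((k:ℤ) - 1)) * (gam D k - ⌊gam D k⌋)) =
          ((-1 : ℝ)^k * ac D p q ((k:ℤ) - 1)) * (gam D k - ⌊gam D k⌋) := by
        rw [pow_succ]; ring
      rw [heq]
      exact mul_pos ih (hfract k).1
  -- positivity of the first embedding
  have harpos : ∀ k : ℕ, 0 < ar D p q ((k:ℤ) - 1) ∧ 0 < ar D p q (k:ℤ) := by
    intro k
    induction k with
    | zero =>
      constructor
      · rw [show ((0:ℕ):ℤ) - 1 = -1 by ring]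
        unfold ar; rw [hpm1, hqm1]; norm_num
      · show 0 < ar D p q 0
        unfold ar
        rw [hp0', hq0, hu0]
        have hm : (0:ℝ) ≤ (⌊-omgc D⌋ : ℤ) := by
          exact_mod_cast Int.floor_nonneg.mpr homgc_neg.le
        split_ifs <;> push_cast <;> linarith
    | succ k ih =>
      have hcast : ((k + 1 : ℕ) : ℤ) = (k:ℤ) + 1 := by push_cast; ring
      constructor
      · rw [show ((k + 1 : ℕ) : ℤ) - 1 = (k:ℤ) by push_cast; ring]
        exact ih.2
      · rw [hcast, har_rec k]
        have hu : (1:ℝ) ≤ (uD D (k+1) : ℝ) := by exact_mod_cast huD_pos k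
        nlinarith [ih.1, ih.2]
  -- determinant identity
  have hdet : ∀ k : ℕ, p (k:ℤ) * q ((k:ℤ) - 1) - p ((k:ℤ) - 1) * q (k:ℤ) = (-1)^(k+1) := by
    intro k
    induction k with
    | zero =>
      show p 0 * q (0 - 1) - p (0 - 1) * q 0 = (-1)^1
      rw [show (0:ℤ) - 1 = -1 by ring, hpm1, hqm1, hq0]
      ring
    | succ k ih =>
      have h1 := hprec ((k:ℤ) - 1) (by omega)
      have h2 := hqrec ((k:ℤ) - 1) (by omega)
      rw [show (k:ℤ) - 1 + 2 = (k:ℤ) + 1 by ring, show (k:ℤ) - 1 + 1 = (k:ℤ) by ring] at h1 h2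
      rw [show ((k + 1 : ℕ) : ℤ) = (k:ℤ) + 1 by push_cast; ring,
        show (k:ℤ) + 1 - 1 = (k:ℤ) by ring, h1, h2, pow_succ]
      linear_combination (-1 : ℤ) * ih
  -- decompose i = 2t - 1
  obtain ⟨j, hj⟩ := hodd
  have hj' : 0 ≤ j + 1 := by omega
  set t : ℕ := (j + 1).toNat with ht
  have hit : i = 2 * (t:ℤ) - 1 := by omega
  have h2t : ((2 * t : ℕ) : ℤ) = 2 * (t:ℤ) := by push_cast; ring
  -- the four quantities
  set A := ar D p q i with hA_def
  set B := ar D p q (i + 1) with hB_def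
  set A' := ac D p q i with hA'_def
  set B' := ac D p q (i + 1) with hB'_def
  have hiA : i = ((2 * t : ℕ) : ℤ) - 1 := by omega
  have hiB : i + 1 = ((2 * t : ℕ) : ℤ) := by omega
  have hA : 0 < A := by rw [hA_def, hiA]; exact (harpos (2 * t)).1
  have hB : 0 < B := by rw [hB_def, hiB]; exact (harpos (2 * t)).2
  have hA' : 0 < A' := by
    have := hacpos (2 * t)
    rw [pow_mul] at this
    norm_num at this
    rw [hA'_def, hiA]
    exact this
  have hsum : 0 < A' + B' := by
    have hBeq : B' = -A' * (gam D (2 * t) - ⌊gam D (2 * t)⌋) := by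
      rw [hB'_def, hiB, hinv (2 * t), ← hiA, ← hA'_def]
    obtain ⟨hf1, hf2⟩ := hfract (2 * t)
    rw [hBeq]
    nlinarith
  -- the cross identity
  have hdR : (p (i + 1) : ℝ) * q i - p i * q (i + 1) = -1 := by
    have h := hdet (2 * t)
    have hpow : ((-1 : ℤ))^(2 * t + 1) = -1 := by
      rw [pow_succ, pow_mul]; norm_num
    rw [hpow, ← hiB, show i + 1 - 1 = i by ring] at h
    exact_mod_cast h
  have hcross : A' * B - A * B' = Real.sqrt (disc D) := by
    rw [hA_def, hB_def, hA'_def, hB'_def]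
    unfold ar ac
    rw [← homg_sub]
    linear_combination (omgc D - omg D) * hdR
  -- final computation
  have he' : (1:ℝ) ≤ (e:ℝ) := by exact_mod_cast he
  have hf' : (1:ℝ) ≤ (f:ℝ) := by exact_mod_cast hf
  have he0 : (0:ℝ) < (e:ℝ) := by linarith
  have hf0 : (0:ℝ) < (f:ℝ) := by linarith
  have hsimp : ar2 D p q i 0 = A ∧ ar2 D p q i 1 = A + B ∧
      ac2 D p q i 0 = A' ∧ ac2 D p q i 1 = A' + B' := by
    unfold ar2 ac2
    push_cast
    constructor
    · rw [hA_def]; ring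
    constructor
    · rw [hA_def, hB_def]; ring
    constructor
    · rw [hA'_def]; ring
    · rw [hA'_def, hB'_def]; ring
  rw [hsimp.1, hsimp.2.1, hsimp.2.2.1, hsimp.2.2.2]
  have key : ((e:ℝ) * A + f * (A + B)) * ((e:ℝ) * A' + f * (A' + B')) -
      (e:ℝ) * f * (A' * B - A * B') =
      (e:ℝ)^2 * (A * A') + 2 * e * f * (A * (A' + B')) + (f:ℝ)^2 * ((A + B) * (A' + B')) := by
    ring
  have hEF : (e:ℝ) * f * (A' * B - A * B') = (e:ℝ) * f * Real.sqrt (disc D) := by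
    rw [hcross]
  nlinarith [mul_pos (mul_pos he0 he0) (mul_pos hA hA'),
    mul_pos (mul_pos he0 hf0) (mul_pos hA hsum),
    mul_pos (mul_pos hf0 hf0) (mul_pos (add_pos hA hB) hsum),
    key, hEF]
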